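/- Let l = (l₁, l₂) and n = (n₁, n₂) be pairs of integers with l₁ ≡ n₁ (mod 2) and l₂ ≡ n₂ (mod 2), and define q(λ₁, λ₂) = q_{l₁,n₁}(λ₁) · q_{l₂,n₂}(λ₂). Let φ : ℂ² → ℂ be entire. Then the following are equivalent: (i) φ(−λ₁, λ₂) · q(λ₁, λ₂) = φ(λ₁, λ₂) · q(−λ₁, λ₂) and φ(λ₁, −λ₂) · q(λ₁, λ₂) = φ(λ₁, λ₂) · q(λ₁, −λ₂) for all (λ₁, λ₂) ∈ ℂ², and φ(λ₁, λ₂) = 0 whenever q_{l₁,n₁}(λ₁) = 0 or q_{l₂,n₂}(λ₂) = 0; (ii) there exists an entire function h : ℂ² → ℂ with h(λ₁, λ₂) = h(−λ₁, λ₂) = h(λ₁, −λ₂) for all (λ₁, λ₂) such that φ(λ₁, λ₂) = h(λ₁, λ₂) · q(λ₁, λ₂) for all (λ₁, λ₂) ∈ ℂ². (This is Theorem 'Intertwining condition in Level 3' for SL(2,ℝ) × SL(2,ℝ) in concrete form: condition (i) is the translation of the intertwining condition (D.3).) -/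

import Mathlib

open Finset in
/-- The polynomial `q_{a,b}` (Definition of `q_{n,m}` for `SL(2,ℝ)`), for integers
`a ≡ b (mod 2)`.  Here `0` is regarded as having the same sign as any integer, which is
encoded by the condition `0 ≤ a * b`. -/
noncomputable def qPoly (a b : ℤ) (z : ℂ) : ℂ :=
  if a = b then 1
  else if 0 ≤ a * b then
    if b.natAbs < a.natAbs then
      ∏ j ∈ range ((a.natAbs - b.natAbs) / 2), (z + (((b.natAbs : ℂ) + 1) / 2 + (j : ℂ)))
    else
      ∏ j ∈ range ((b.natAbs - a.natAbs) / 2), (z - (((a.natAbs : ℂ) + 1) / 2 + (j : ℂ)))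
  else
    ∏ j ∈ range ((a.natAbs + b.natAbs) / 2), (z + (((a.natAbs : ℂ) - 1) / 2 - (j : ℂ)))

open Complex Metric MeasureTheory Set Filter intervalIntegral Real Topology

noncomputable section

def mker (ζ η : ℂ) (x : ℂ × ℂ) : ℂ := (η - x.2)⁻¹ * (ζ - x.1)⁻¹

def mkerD (ζ η : ℂ) (x : ℂ × ℂ) : (ℂ × ℂ) →L[ℂ] ℂ :=
  ((η - x.2)⁻¹ * ((ζ - x.1)⁻¹) ^ 2) • (ContinuousLinearMap.fst ℂ ℂ ℂ)
    + (((η - x.2)⁻¹) ^ 2 * (ζ - x.1)⁻¹) • (ContinuousLinearMap.snd ℂ ℂ ℂ)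

theorem hasFDerivAt_mker {ζ η : ℂ} {x : ℂ × ℂ} (h1 : ζ - x.1 ≠ 0) (h2 : η - x.2 ≠ 0) :
    HasFDerivAt (mker ζ η) (mkerD ζ η x) x := by
  have hu : HasFDerivAt (fun y : ℂ × ℂ => (η - y.2)⁻¹)
      (((η - x.2)⁻¹ ^ 2 : ℂ) • (ContinuousLinearMap.snd ℂ ℂ ℂ)) x := by
    have hw : HasFDerivAt (fun y : ℂ × ℂ => η - y.2)
        (-(ContinuousLinearMap.snd ℂ ℂ ℂ)) x := by
      simpa [zero_sub] using ((hasFDerivAt_snd (𝕜 := ℂ) (p := x)).const_sub η)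
    have hinv : HasDerivAt Inv.inv (-((η - x.2) ^ 2)⁻¹) (η - x.2) := hasDerivAt_inv h2
    exact (hinv.comp_hasFDerivAt x hw).congr_fderiv (by
      refine ContinuousLinearMap.ext fun y => ?_
      simp only [ContinuousLinearMap.smul_apply, ContinuousLinearMap.neg_apply,
        ContinuousLinearMap.coe_snd', smul_eq_mul, ← inv_pow]
      ring)
  have hv : HasFDerivAt (fun y : ℂ × ℂ => (ζ - y.1)⁻¹)
      (((ζ - x.1)⁻¹ ^ 2 : ℂ) • (ContinuousLinearMap.fst ℂ ℂ ℂ)) x := by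
    have hw : HasFDerivAt (fun y : ℂ × ℂ => ζ - y.1)
        (-(ContinuousLinearMap.fst ℂ ℂ ℂ)) x := by
      simpa [zero_sub] using ((hasFDerivAt_fst (𝕜 := ℂ) (p := x)).const_sub ζ)
    have hinv : HasDerivAt Inv.inv (-((ζ - x.1) ^ 2)⁻¹) (ζ - x.1) := hasDerivAt_inv h1
    exact (hinv.comp_hasFDerivAt x hw).congr_fderiv (by
      refine ContinuousLinearMap.ext fun y => ?_
      simp only [ContinuousLinearMap.smul_apply, ContinuousLinearMap.neg_apply,
        ContinuousLinearMap.coe_fst', smul_eq_mul, ← inv_pow]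
      ring)
  exact (hu.mul hv).congr_fderiv (by
    refine ContinuousLinearMap.ext fun y => ?_
    simp only [mkerD, ContinuousLinearMap.add_apply, ContinuousLinearMap.smul_apply,
      ContinuousLinearMap.coe_fst', ContinuousLinearMap.coe_snd', smul_eq_mul]
    ring)


theorem norm_mkerD_le {ζ η : ℂ} {x : ℂ × ℂ} {A : ℝ} (hA : 0 ≤ A)
    (h1 : ‖(ζ - x.1)⁻¹‖ ≤ A) (h2 : ‖(η - x.2)⁻¹‖ ≤ A) :
    ‖mkerD ζ η x‖ ≤ 2 * A ^ 3 := by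
  refine ContinuousLinearMap.opNorm_le_bound _ (by positivity) fun y => ?_
  have hy1 : ‖y.1‖ ≤ ‖y‖ := norm_fst_le y
  have hy2 : ‖y.2‖ ≤ ‖y‖ := norm_snd_le y
  calc ‖(mkerD ζ η x) y‖
      ≤ ‖((η - x.2)⁻¹ * ((ζ - x.1)⁻¹) ^ 2) * y.1‖ + ‖(((η - x.2)⁻¹) ^ 2 * (ζ - x.1)⁻¹) * y.2‖ := by
        simp only [mkerD, ContinuousLinearMap.add_apply, ContinuousLinearMap.smul_apply,
          ContinuousLinearMap.coe_fst', ContinuousLinearMap.coe_snd', smul_eq_mul]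
        exact norm_add_le _ _
    _ = ‖(η - x.2)⁻¹‖ * ‖(ζ - x.1)⁻¹‖ ^ 2 * ‖y.1‖ + ‖(η - x.2)⁻¹‖ ^ 2 * ‖(ζ - x.1)⁻¹‖ * ‖y.2‖ := by
        rw [norm_mul, norm_mul, norm_mul, norm_mul, norm_pow, norm_pow]
    _ ≤ A * A ^ 2 * ‖y‖ + A ^ 2 * A * ‖y‖ := by gcongr <;> first | exact norm_nonneg _ | assumption
    _ = 2 * A ^ 3 * ‖y‖ := by ring

theorem circleMap_sub_ne_zero {a x : ℂ} (h : x ∈ ball a 1) (θ : ℝ) :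
    circleMap a 1 θ - x ≠ 0 := by
  intro h0
  rw [sub_eq_zero] at h0
  have h1 : circleMap a 1 θ ∈ sphere a 1 := circleMap_mem_sphere a zero_le_one θ
  rw [mem_sphere] at h1
  rw [mem_ball, ← h0, h1] at h
  exact lt_irrefl _ h

theorem norm_inv_le_four {u : ℂ} (h : (4:ℝ)⁻¹ ≤ ‖u‖) : ‖u⁻¹‖ ≤ 4 := by
  rw [norm_inv]
  calc ‖u‖⁻¹ ≤ ((4:ℝ)⁻¹)⁻¹ := by
        apply inv_anti₀ (by norm_num) h
    _ = 4 := by norm_num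

/-- distance of circle point to a point in a concentric smaller ball -/
theorem circleMap_dist_ge {a x : ℂ} {r : ℝ} (h : dist x a ≤ r) (hr : r ≤ 3/4) (θ : ℝ) :
    (4:ℝ)⁻¹ ≤ ‖circleMap a 1 θ - x‖ := by
  have h1 : dist (circleMap a 1 θ) a = 1 := by
    have := circleMap_mem_sphere a zero_le_one θ; rwa [mem_sphere] at this
  have h2 : dist (circleMap a 1 θ) a ≤ dist (circleMap a 1 θ) x + dist x a := dist_triangle _ _ _
  have : dist (circleMap a 1 θ) x ≥ 1 - r := by
    rw [h1] at h2; linarith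
  rw [← dist_eq_norm]
  linarith

section Division

variable (φ : ℂ × ℂ → ℂ) (c w₀ : ℂ)

def gfun (θ : ℝ × ℝ) : ℂ :=
  deriv (circleMap w₀ 1) θ.1 * deriv (circleMap c 1) θ.2 *
    (φ (circleMap c 1 θ.2, circleMap w₀ 1 θ.1) * (circleMap c 1 θ.2 - c)⁻¹)

def boxμ : Measure (ℝ × ℝ) :=
  (volume.restrict (Ioc 0 (2*π))).prod (volume.restrict (Ioc 0 (2*π)))

def kk (x : ℂ × ℂ) (θ : ℝ × ℝ) : ℂ :=
  gfun φ c w₀ θ * mker (circleMap c 1 θ.2) (circleMap w₀ 1 θ.1) x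

def PhiInt : ℂ × ℂ → ℂ := fun x =>
  (2*π*Complex.I)⁻¹ * ((2*π*Complex.I)⁻¹ * ∫ θ, kk φ c w₀ x θ ∂(boxμ))

variable {φ c w₀}

theorem continuous_gfun (hφ : Continuous φ) : Continuous (gfun φ c w₀) := by
  have : gfun φ c w₀ = fun θ : ℝ × ℝ =>
      (circleMap 0 1 θ.1 * Complex.I) * (circleMap 0 1 θ.2 * Complex.I) *
        (φ (circleMap c 1 θ.2, circleMap w₀ 1 θ.1) * (circleMap 0 1 θ.2)⁻¹) := by
    funext θ; simp [gfun, deriv_circleMap, circleMap_sub_center]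
  rw [this]
  have hc1 : Continuous fun θ : ℝ × ℝ => circleMap 0 1 θ.1 :=
    (continuous_circleMap 0 1).comp continuous_fst
  have hc2 : Continuous fun θ : ℝ × ℝ => circleMap 0 1 θ.2 :=
    (continuous_circleMap 0 1).comp continuous_snd
  have hφc : Continuous fun θ : ℝ × ℝ => φ (circleMap c 1 θ.2, circleMap w₀ 1 θ.1) :=
    hφ.comp (((continuous_circleMap c 1).comp continuous_snd).prodMk
      ((continuous_circleMap w₀ 1).comp continuous_fst))
  exact ((hc1.mul continuous_const).mul (hc2.mul continuous_const)).mul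
    (hφc.mul (hc2.inv₀ fun θ => circleMap_ne_center one_ne_zero))

theorem continuous_mker_theta {x : ℂ × ℂ} (hx1 : x.1 ∈ ball c 1) (hx2 : x.2 ∈ ball w₀ 1) :
    Continuous fun θ : ℝ × ℝ => mker (circleMap c 1 θ.2) (circleMap w₀ 1 θ.1) x := by
  unfold mker
  exact ((((continuous_circleMap w₀ 1).comp continuous_fst).sub continuous_const).inv₀
      fun θ => circleMap_sub_ne_zero hx2 _).mul
    ((((continuous_circleMap c 1).comp continuous_snd).sub continuous_const).inv₀
      fun θ => circleMap_sub_ne_zero hx1 _)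

theorem integrable_box {E : Type*} [NormedAddCommGroup E] {f : ℝ × ℝ → E} (hf : Continuous f) : Integrable f (boxμ) := by
  rw [boxμ, Measure.prod_restrict, ← Measure.volume_eq_prod]
  exact ((hf.continuousOn).integrableOn_compact (isCompact_Icc.prod isCompact_Icc)).mono_set
    (Set.prod_mono Ioc_subset_Icc_self Ioc_subset_Icc_self)

theorem integrable_kk (hφ : Continuous φ) {x : ℂ × ℂ} (hx1 : x.1 ∈ ball c 1)
    (hx2 : x.2 ∈ ball w₀ 1) : Integrable (kk φ c w₀ x) (boxμ) :=
  integrable_box ((continuous_gfun hφ).mul (continuous_mker_theta hx1 hx2))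

theorem dslope_entire {f : ℂ → ℂ} (hf : Differentiable ℂ f) (c : ℂ) :
    Differentiable ℂ (dslope f c) := by
  intro z
  rcases eq_or_ne z c with rfl | hz
  · obtain ⟨p, hp⟩ := hf.analyticAt z
    exact hp.has_fpower_series_dslope_fslope.analyticAt.differentiableAt
  · exact (differentiableAt_dslope_of_ne hz).mpr (hf z)

theorem PhiInt_eq (hφ : Differentiable ℂ φ) (hvan : ∀ w, φ (c, w) = 0) {x : ℂ × ℂ}
    (hx1 : x.1 ∈ ball c 1) (hx2 : x.2 ∈ ball w₀ 1) (hne : x.1 ≠ c) :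
    PhiInt φ c w₀ x = φ x * (x.1 - c)⁻¹ := by
  have h2pi : (2*π*Complex.I : ℂ) ≠ 0 := by
    simp [Real.pi_ne_zero, Complex.I_ne_zero]
  have hπpos : (0:ℝ) ≤ 2*π := by positivity
  have hxc : x.1 - c ≠ 0 := sub_ne_zero.mpr hne
  -- inner integral
  have inner_eq : ∀ θ₁ : ℝ, (∫ θ₂ in Ioc 0 (2*π), kk φ c w₀ x (θ₁, θ₂)) =
      deriv (circleMap w₀ 1) θ₁ * ((circleMap w₀ 1 θ₁ - x.2)⁻¹ *
        (2*π*Complex.I * (φ (x.1, circleMap w₀ 1 θ₁) * (x.1-c)⁻¹))) := by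
    intro θ₁
    set η := circleMap w₀ 1 θ₁ with hη
    set f1 : ℂ → ℂ := dslope (fun u => φ (u, η)) c with hf1
    have hf1d : Differentiable ℂ f1 :=
      dslope_entire (hφ.comp ((differentiable_id.prodMk (differentiable_const η)))) c
    have hcirc : (∮ ζ in C(c,1), (ζ - x.1)⁻¹ • f1 ζ) = (2*π*Complex.I) • f1 x.1 :=
      (hf1d.diffContOnCl).circleIntegral_sub_inv_smul hx1
    have hf1x : f1 x.1 = φ (x.1, η) * (x.1 - c)⁻¹ := by
      rw [hf1, dslope_of_ne _ hne, slope_def_field, hvan η]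
      field_simp
      simp
    have hf1circ : ∀ θ₂ : ℝ, f1 (circleMap c 1 θ₂) =
        φ (circleMap c 1 θ₂, η) * (circleMap c 1 θ₂ - c)⁻¹ := by
      intro θ₂
      rw [hf1, dslope_of_ne _ (circleMap_ne_center one_ne_zero), slope_def_field, hvan η]
      field_simp
      simp
    rw [← intervalIntegral.integral_of_le hπpos]
    have expand : (∫ θ₂ in (0:ℝ)..(2*π), kk φ c w₀ x (θ₁, θ₂)) =
        deriv (circleMap w₀ 1) θ₁ * ((η - x.2)⁻¹ *
          (∮ ζ in C(c,1), (ζ - x.1)⁻¹ • f1 ζ)) := by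
      rw [circleIntegral]
      rw [← intervalIntegral.integral_const_mul, ← intervalIntegral.integral_const_mul]
      apply intervalIntegral.integral_congr
      intro θ₂ _
      beta_reduce
      rw [hf1circ θ₂]
      simp only [kk, gfun, mker, smul_eq_mul]
      ring
    rw [expand, hcirc, smul_eq_mul, hf1x]
  -- outer integral
  have outer : (∫ θ, kk φ c w₀ x θ ∂(boxμ)) =
      2*π*Complex.I * (2*π*Complex.I * (φ x * (x.1-c)⁻¹)) := by
    rw [boxμ, MeasureTheory.integral_prod _ (by rw [← boxμ]; exact integrable_kk hφ.continuous hx1 hx2)]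
    have : ∀ θ₁ : ℝ, (∫ θ₂ in Ioc 0 (2*π), kk φ c w₀ x (θ₁, θ₂)) =
        deriv (circleMap w₀ 1) θ₁ * ((circleMap w₀ 1 θ₁ - x.2)⁻¹ *
          (2*π*Complex.I * (φ (x.1, circleMap w₀ 1 θ₁) * (x.1-c)⁻¹))) := inner_eq
    rw [MeasureTheory.integral_congr_ae (Filter.Eventually.of_forall fun θ₁ => this θ₁)]
    rw [← intervalIntegral.integral_of_le hπpos]
    set f2 : ℂ → ℂ := fun v => φ (x.1, v) with hf2
    have hf2d : Differentiable ℂ f2 :=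
      hφ.comp ((differentiable_const x.1).prodMk differentiable_id)
    have hcirc2 : (∮ η in C(w₀,1), (η - x.2)⁻¹ • f2 η) = (2*π*Complex.I) • f2 x.2 :=
      (hf2d.diffContOnCl).circleIntegral_sub_inv_smul hx2
    have expand2 : (∫ θ₁ in (0:ℝ)..(2*π), deriv (circleMap w₀ 1) θ₁ *
        ((circleMap w₀ 1 θ₁ - x.2)⁻¹ * (2*π*Complex.I * (φ (x.1, circleMap w₀ 1 θ₁) * (x.1-c)⁻¹)))) =
        (2*π*Complex.I * (x.1-c)⁻¹) * (∮ η in C(w₀,1), (η - x.2)⁻¹ • f2 η) := by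
      rw [circleIntegral, ← intervalIntegral.integral_const_mul]
      apply intervalIntegral.integral_congr
      intro θ₁ _
      simp only [hf2, smul_eq_mul]
      ring
    rw [expand2, hcirc2, smul_eq_mul, hf2]
    simp only [Prod.mk.eta]
    ring
  rw [PhiInt, outer]
  field_simp


theorem fst_dist_le (p q : ℂ × ℂ) : dist p.1 q.1 ≤ dist p q := by
  rw [Prod.dist_eq]; exact le_max_left _ _

theorem snd_dist_le (p q : ℂ × ℂ) : dist p.2 q.2 ≤ dist p q := by
  rw [Prod.dist_eq]; exact le_max_right _ _

theorem PhiInt_differentiableAt (hφ : Differentiable ℂ φ) {x₀ : ℂ × ℂ}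
    (h1 : x₀.1 ∈ ball c (1/2)) (h2 : x₀.2 ∈ ball w₀ (1/2)) :
    DifferentiableAt ℂ (PhiInt φ c w₀) x₀ := by
  rw [mem_ball] at h1 h2
  have hball : ∀ y : ℂ × ℂ, y ∈ ball x₀ (4:ℝ)⁻¹ → dist y.1 c ≤ 3/4 ∧ dist y.2 w₀ ≤ 3/4 := by
    intro y hy
    rw [mem_ball] at hy
    have e1 := fst_dist_le y x₀
    have e2 := snd_dist_le y x₀
    constructor
    · calc dist y.1 c ≤ dist y.1 x₀.1 + dist x₀.1 c := dist_triangle _ _ _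
        _ ≤ 3/4 := by linarith
    · calc dist y.2 w₀ ≤ dist y.2 x₀.2 + dist x₀.2 w₀ := dist_triangle _ _ _
        _ ≤ 3/4 := by linarith
  have hballmem : ∀ y : ℂ × ℂ, y ∈ ball x₀ (4:ℝ)⁻¹ → y.1 ∈ ball c 1 ∧ y.2 ∈ ball w₀ 1 := by
    intro y hy
    obtain ⟨e1, e2⟩ := hball y hy
    exact ⟨mem_ball.mpr (by linarith), mem_ball.mpr (by linarith)⟩
  have hnorm : ∀ (θ : ℝ × ℝ) (y : ℂ × ℂ), y ∈ ball x₀ (4:ℝ)⁻¹ →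
      ((4:ℝ)⁻¹ ≤ ‖circleMap c 1 θ.2 - y.1‖ ∧ (4:ℝ)⁻¹ ≤ ‖circleMap w₀ 1 θ.1 - y.2‖) := by
    intro θ y hy
    obtain ⟨e1, e2⟩ := hball y hy
    exact ⟨circleMap_dist_ge e1 (by norm_num) _, circleMap_dist_ge e2 (by norm_num) _⟩
  have hx₀self : x₀ ∈ ball x₀ (4:ℝ)⁻¹ := mem_ball_self (by norm_num)
  have F'cont : Continuous fun θ : ℝ × ℝ =>
      gfun φ c w₀ θ • mkerD (circleMap c 1 θ.2) (circleMap w₀ 1 θ.1) x₀ := by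
    apply (continuous_gfun hφ.continuous).smul
    unfold mkerD
    have hc1 : Continuous fun θ : ℝ × ℝ => (circleMap w₀ 1 θ.1 - x₀.2)⁻¹ :=
      (((continuous_circleMap w₀ 1).comp continuous_fst).sub continuous_const).inv₀
        fun θ => circleMap_sub_ne_zero (hballmem x₀ hx₀self).2 _
    have hc2 : Continuous fun θ : ℝ × ℝ => (circleMap c 1 θ.2 - x₀.1)⁻¹ :=
      (((continuous_circleMap c 1).comp continuous_snd).sub continuous_const).inv₀
        fun θ => circleMap_sub_ne_zero (hballmem x₀ hx₀self).1 _
    exact ((hc1.mul (hc2.pow 2)).smul continuous_const).add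
      (((hc1.pow 2).mul hc2).smul continuous_const)
  have key := hasFDerivAt_integral_of_dominated_loc_of_lip'
    (𝕜 := ℂ) (μ := boxμ) (F := kk φ c w₀) (x₀ := x₀)
    (F' := fun θ : ℝ × ℝ => gfun φ c w₀ θ • mkerD (circleMap c 1 θ.2) (circleMap w₀ 1 θ.1) x₀)
    (bound := fun θ => ‖gfun φ c w₀ θ‖ * 128) (s := ball x₀ (4:ℝ)⁻¹)
    (ball_mem_nhds _ (by norm_num))
    (fun x hx => ((continuous_gfun hφ.continuous).mul
      (continuous_mker_theta (hballmem x hx).1 (hballmem x hx).2)).aestronglyMeasurable)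
    (integrable_kk hφ.continuous (hballmem x₀ hx₀self).1 (hballmem x₀ hx₀self).2)
    (F'cont.aestronglyMeasurable)
    (Filter.Eventually.of_forall (by
      intro θ x hx
      set ζ := circleMap c 1 θ.2 with hζ
      set η := circleMap w₀ 1 θ.1 with hη
      have hm : ∀ y ∈ ball x₀ (4:ℝ)⁻¹,
          HasFDerivWithinAt (mker ζ η) (mkerD ζ η y) (ball x₀ (4:ℝ)⁻¹) y := by
        intro y hy
        obtain ⟨e1, e2⟩ := hnorm θ y hy
        refine (hasFDerivAt_mker ?_ ?_).hasFDerivWithinAt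
        · intro h0; rw [h0, norm_zero] at e1; norm_num at e1
        · intro h0; rw [h0, norm_zero] at e2; norm_num at e2
      have hbd : ∀ y ∈ ball x₀ (4:ℝ)⁻¹, ‖mkerD ζ η y‖ ≤ 128 := by
        intro y hy
        obtain ⟨e1, e2⟩ := hnorm θ y hy
        have := norm_mkerD_le (by norm_num : (0:ℝ) ≤ 4)
          (norm_inv_le_four e1) (norm_inv_le_four e2)
        calc ‖mkerD ζ η y‖ ≤ 2 * 4 ^ 3 := this
          _ = 128 := by norm_num
      have hlip := (convex_ball x₀ (4:ℝ)⁻¹).norm_image_sub_le_of_norm_hasFDerivWithin_le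
        hm hbd hx₀self hx
      calc ‖kk φ c w₀ x θ - kk φ c w₀ x₀ θ‖
          = ‖gfun φ c w₀ θ‖ * ‖mker ζ η x - mker ζ η x₀‖ := by
            rw [kk, kk, ← mul_sub, norm_mul]
        _ ≤ ‖gfun φ c w₀ θ‖ * (128 * ‖x - x₀‖) := by
            apply mul_le_mul_of_nonneg_left hlip (norm_nonneg _)
        _ = ‖gfun φ c w₀ θ‖ * 128 * ‖x - x₀‖ := by ring))
    (integrable_box ((continuous_gfun hφ.continuous).norm.mul continuous_const))
    (Filter.Eventually.of_forall (by
      intro θ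
      obtain ⟨e1, e2⟩ := hnorm θ x₀ hx₀self
      have h1' : circleMap c 1 θ.2 - x₀.1 ≠ 0 := by
        intro h0; rw [h0, norm_zero] at e1; norm_num at e1
      have h2' : circleMap w₀ 1 θ.1 - x₀.2 ≠ 0 := by
        intro h0; rw [h0, norm_zero] at e2; norm_num at e2
      exact (hasFDerivAt_mker h1' h2').const_mul (gfun φ c w₀ θ)))
  have main : DifferentiableAt ℂ (fun x => ∫ θ, kk φ c w₀ x θ ∂(boxμ)) x₀ :=
    key.2.differentiableAt
  exact (main.const_mul _).const_mul _

end Division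

theorem div_fst {φ : ℂ × ℂ → ℂ} (hφ : Differentiable ℂ φ) {c : ℂ}
    (hvan : ∀ w, φ (c, w) = 0) :
    ∃ ψ : ℂ × ℂ → ℂ, Differentiable ℂ ψ ∧ ∀ p : ℂ × ℂ, φ p = (p.1 - c) * ψ p := by
  classical
  set ψ : ℂ × ℂ → ℂ :=
    fun p => if p.1 = c then PhiInt φ c p.2 p else φ p * (p.1 - c)⁻¹ with hψdef
  have hSopen : IsOpen {x : ℂ × ℂ | x.1 ≠ c} := isOpen_ne.preimage continuous_fst
  refine ⟨ψ, ?_, ?_⟩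
  · -- differentiability
    intro q
    by_cases hq : q.1 = c
    · have hq1 : q.1 ∈ ball c (1/2) := by rw [hq]; exact mem_ball_self (by norm_num)
      have hq2 : q.2 ∈ ball q.2 (1/2) := mem_ball_self (by norm_num)
      have hd := PhiInt_differentiableAt hφ hq1 hq2
      have hU : (ball c (1/2) ×ˢ ball q.2 (1/2)) ∈ 𝓝 q := by
        have : q = (q.1, q.2) := rfl
        rw [this, hq]
        exact prod_mem_nhds (ball_mem_nhds _ (by norm_num)) (ball_mem_nhds _ (by norm_num))
      have heq : ∀ p ∈ ball c (1/2) ×ˢ ball q.2 (1/2), ψ p = PhiInt φ c q.2 p := by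
        intro p hp
        obtain ⟨hp1, hp2⟩ := Set.mem_prod.1 hp
        have hp1' : p.1 ∈ ball c 1 := ball_subset_ball (by norm_num) hp1
        have hp2' : p.2 ∈ ball q.2 1 := ball_subset_ball (by norm_num) hp2
        by_cases hpc : p.1 = c
        · have hψp : ψ p = PhiInt φ c p.2 p := by rw [hψdef]; simp only [if_pos hpc]
          rw [hψp]
          -- both sides continuous at p, agree on a dense-near set
          set l := 𝓝[{x : ℂ × ℂ | x.1 ≠ c}] p with hl
          have hcl : p ∈ closure {x : ℂ × ℂ | x.1 ≠ c} := by
            rw [Metric.mem_closure_iff]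
            intro ε hε
            refine ⟨(p.1 + ((ε/2 : ℝ) : ℂ), p.2), ?_, ?_⟩
            · simp only [Set.mem_setOf_eq]
              rw [hpc]
              intro h0
              have h0' : ((ε/2 : ℝ) : ℂ) = 0 := by simpa using h0
              rw [Complex.ofReal_eq_zero] at h0'
              linarith
            · have hd1 : dist p.1 (p.1 + ((ε/2 : ℝ) : ℂ)) = ε/2 := by
                rw [dist_eq_norm]
                simp only [sub_add_cancel_left, norm_neg, Complex.norm_real, Real.norm_eq_abs]
                exact abs_of_pos (by linarith)
              rw [Prod.dist_eq, dist_self, hd1, max_eq_left (by linarith)]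
              linarith
          have hne : l.NeBot := mem_closure_iff_nhdsWithin_neBot.mp hcl
          have c1 : ContinuousAt (PhiInt φ c p.2) p :=
            (PhiInt_differentiableAt hφ hp1 (mem_ball_self (by norm_num))).continuousAt
          have c2 : ContinuousAt (PhiInt φ c q.2) p :=
            (PhiInt_differentiableAt hφ hp1 hp2).continuousAt
          have t1 : Filter.Tendsto (PhiInt φ c p.2) l (𝓝 (PhiInt φ c p.2 p)) :=
            c1.continuousWithinAt
          have t2 : Filter.Tendsto (PhiInt φ c q.2) l (𝓝 (PhiInt φ c q.2 p)) :=
            c2.continuousWithinAt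
          have hV : (ball c (1/2) ×ˢ ball q.2 (1/2)) ∈ l :=
            mem_nhdsWithin_of_mem_nhds (by
              have hpp : p = (p.1, p.2) := rfl
              rw [hpp]
              exact prod_mem_nhds (isOpen_ball.mem_nhds hp1) (isOpen_ball.mem_nhds hp2))
          have hs : {x : ℂ × ℂ | x.1 ≠ c} ∈ l := self_mem_nhdsWithin
          have heq' : PhiInt φ c p.2 =ᶠ[l] PhiInt φ c q.2 := by
            filter_upwards [hV, hs] with y hyV hys
            obtain ⟨hy1, hy2⟩ := Set.mem_prod.1 hyV
            have hy1' : y.1 ∈ ball c 1 := ball_subset_ball (by norm_num) hy1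
            have hy2q : y.2 ∈ ball q.2 1 := ball_subset_ball (by norm_num) hy2
            have hy2p : y.2 ∈ ball p.2 1 := by
              rw [mem_ball] at hp2 hy2 ⊢
              calc dist y.2 p.2 ≤ dist y.2 q.2 + dist q.2 p.2 := dist_triangle _ _ _
                _ < 1 := by rw [dist_comm q.2 p.2]; linarith
            rw [PhiInt_eq hφ hvan hy1' hy2p hys, PhiInt_eq hφ hvan hy1' hy2q hys]
          exact tendsto_nhds_unique (t1.congr' heq') t2
        · rw [hψdef]
          simp only [if_neg hpc]
          exact (PhiInt_eq hφ hvan hp1' hp2' hpc).symm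
      have hψeq : ψ =ᶠ[𝓝 q] PhiInt φ c q.2 := by
        filter_upwards [hU] with p hp using heq p hp
      exact hd.congr_of_eventuallyEq hψeq
    · have hev : ψ =ᶠ[𝓝 q] fun p => φ p * (p.1 - c)⁻¹ := by
        filter_upwards [hSopen.mem_nhds hq] with y hy
        rw [hψdef]; simp only [if_neg hy]
      exact ((hφ q).mul ((differentiableAt_fst.sub_const c).inv
        (sub_ne_zero.mpr hq))).congr_of_eventuallyEq hev
  · intro p
    by_cases hp : p.1 = c
    · have hpp : p = (c, p.2) := by rw [← hp]
      rw [hpp, hvan p.2, hpp]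
      simp
    · rw [hψdef]
      simp only [if_neg hp]
      field_simp [sub_ne_zero.mpr hp]

theorem div_snd {φ : ℂ × ℂ → ℂ} (hφ : Differentiable ℂ φ) {d : ℂ}
    (hvan : ∀ z, φ (z, d) = 0) :
    ∃ ψ : ℂ × ℂ → ℂ, Differentiable ℂ ψ ∧ ∀ p : ℂ × ℂ, φ p = (p.2 - d) * ψ p := by
  have hsw : Differentiable ℂ (fun p : ℂ × ℂ => φ (p.2, p.1)) :=
    hφ.comp (differentiable_snd.prodMk differentiable_fst)
  obtain ⟨ψ', hψ'd, hψ'⟩ := div_fst hsw (c := d) (fun w => hvan w)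
  refine ⟨fun p => ψ' (p.2, p.1), hψ'd.comp (differentiable_snd.prodMk differentiable_fst),
    fun p => ?_⟩
  have := hψ' (p.2, p.1)
  simpa using this

open Finset in
/-- Strip all factors in the second variable. -/
theorem strip_snd (T : Finset ℂ) :
    ∀ φ : ℂ × ℂ → ℂ, Differentiable ℂ φ → (∀ z : ℂ × ℂ, z.2 ∈ T → φ z = 0) →
    ∃ ψ : ℂ × ℂ → ℂ, Differentiable ℂ ψ ∧
      ∀ z : ℂ × ℂ, φ z = (∏ d ∈ T, (z.2 - d)) * ψ z := by
  induction T using Finset.induction_on with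
  | empty => exact fun φ hφ _ => ⟨φ, hφ, fun z => by simp⟩
  | @insert d T hd ih =>
    intro φ hφ hvan
    obtain ⟨ψ₁, hψ₁d, hψ₁⟩ := div_snd hφ (d := d) (fun z => hvan (z, d) (by simp))
    have hvan₁ : ∀ z : ℂ × ℂ, z.2 ∈ T → ψ₁ z = 0 := by
      intro z hz
      have hne : z.2 - d ≠ 0 := sub_ne_zero.mpr (fun h => hd (h ▸ hz))
      have h0 : (z.2 - d) * ψ₁ z = 0 := (hψ₁ z).symm.trans (hvan z (by simp [hz]))
      exact (mul_eq_zero.mp h0).resolve_left hne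
    obtain ⟨ψ, hψd, hψ⟩ := ih ψ₁ hψ₁d hvan₁
    refine ⟨ψ, hψd, fun z => ?_⟩
    rw [hψ₁ z, hψ z, Finset.prod_insert hd]
    ring

open Finset in
/-- Strip factors in both variables. -/
theorem strip_both (S T : Finset ℂ) :
    ∀ φ : ℂ × ℂ → ℂ, Differentiable ℂ φ →
      (∀ z : ℂ × ℂ, z.1 ∈ S → φ z = 0) → (∀ z : ℂ × ℂ, z.2 ∈ T → φ z = 0) →
    ∃ ψ : ℂ × ℂ → ℂ, Differentiable ℂ ψ ∧
      ∀ z : ℂ × ℂ, φ z = ((∏ c ∈ S, (z.1 - c)) * ∏ d ∈ T, (z.2 - d)) * ψ z := by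
  induction S using Finset.induction_on with
  | empty =>
    intro φ hφ _ hvT
    obtain ⟨ψ, hψd, hψ⟩ := strip_snd T φ hφ hvT
    exact ⟨ψ, hψd, fun z => by simpa using hψ z⟩
  | @insert c S hc ih =>
    intro φ hφ hvS hvT
    obtain ⟨ψ₁, hψ₁d, hψ₁⟩ := div_fst hφ (c := c) (fun w => hvS (c, w) (by simp))
    have hvS₁ : ∀ z : ℂ × ℂ, z.1 ∈ S → ψ₁ z = 0 := by
      intro z hz
      have hne : z.1 - c ≠ 0 := sub_ne_zero.mpr (fun h => hc (h ▸ hz))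
      have h0 : (z.1 - c) * ψ₁ z = 0 := (hψ₁ z).symm.trans (hvS z (by simp [hz]))
      exact (mul_eq_zero.mp h0).resolve_left hne
    have hvT₁ : ∀ z : ℂ × ℂ, z.2 ∈ T → ψ₁ z = 0 := by
      intro z hz
      -- ψ₁ (·, z.2) vanishes off {c}, hence everywhere by continuity
      have hcont : Continuous fun u : ℂ => ψ₁ (u, z.2) :=
        hψ₁d.continuous.comp (continuous_id.prodMk continuous_const)
      have hEq : Set.EqOn (fun u : ℂ => ψ₁ (u, z.2)) (fun _ => 0) {c}ᶜ := by
        intro u hu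
        have hne : u - c ≠ 0 := sub_ne_zero.mpr hu
        have h0 : (u - c) * ψ₁ (u, z.2) = 0 := by
          have := (hψ₁ (u, z.2)).symm.trans (hvT (u, z.2) hz)
          simpa using this
        simpa using (mul_eq_zero.mp h0).resolve_left hne
      have := Continuous.ext_on (dense_compl_singleton c) hcont continuous_const hEq
      have hz2 : ψ₁ (z.1, z.2) = 0 := congrFun this z.1
      simpa using hz2
    obtain ⟨ψ, hψd, hψ⟩ := ih ψ₁ hψ₁d hvS₁ hvT₁
    refine ⟨ψ, hψd, fun z => ?_⟩
    rw [hψ₁ z, hψ z, Finset.prod_insert hc]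
    ring


open Finset in
theorem qPoly_exists_roots (a b : ℤ) :
    ∃ S : Finset ℂ, ∀ z : ℂ, qPoly a b z = ∏ r ∈ S, (z - r) := by
  by_cases hab : a = b
  · exact ⟨∅, fun z => by unfold qPoly; simp [hab]⟩
  by_cases hs : 0 ≤ a * b
  · by_cases hlt : b.natAbs < a.natAbs
    · have hinj : ∀ i ∈ range ((a.natAbs - b.natAbs) / 2), ∀ j ∈ range ((a.natAbs - b.natAbs) / 2),
          (fun j : ℕ => -(((b.natAbs : ℂ) + 1) / 2 + (j : ℂ))) i
            = (fun j : ℕ => -(((b.natAbs : ℂ) + 1) / 2 + (j : ℂ))) j → i = j := by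
        intro i _ j _ hij
        simp only at hij
        have : (i : ℂ) = (j : ℂ) := by linear_combination -hij
        exact_mod_cast this
      refine ⟨(range ((a.natAbs - b.natAbs) / 2)).image
        (fun j : ℕ => -(((b.natAbs : ℂ) + 1) / 2 + (j : ℂ))), fun z => ?_⟩
      unfold qPoly
      simp only [if_neg hab, if_pos hs, if_pos hlt]
      rw [Finset.prod_image hinj]
      exact Finset.prod_congr rfl fun j _ => by ring
    · have hinj : ∀ i ∈ range ((b.natAbs - a.natAbs) / 2), ∀ j ∈ range ((b.natAbs - a.natAbs) / 2),
          (fun j : ℕ => ((a.natAbs : ℂ) + 1) / 2 + (j : ℂ)) i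
            = (fun j : ℕ => ((a.natAbs : ℂ) + 1) / 2 + (j : ℂ)) j → i = j := by
        intro i _ j _ hij
        simp only at hij
        have : (i : ℂ) = (j : ℂ) := by linear_combination hij
        exact_mod_cast this
      refine ⟨(range ((b.natAbs - a.natAbs) / 2)).image
        (fun j : ℕ => ((a.natAbs : ℂ) + 1) / 2 + (j : ℂ)), fun z => ?_⟩
      unfold qPoly
      simp only [if_neg hab, if_pos hs, if_neg hlt]
      rw [Finset.prod_image hinj]
  · have hinj : ∀ i ∈ range ((a.natAbs + b.natAbs) / 2), ∀ j ∈ range ((a.natAbs + b.natAbs) / 2),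
        (fun j : ℕ => (j : ℂ) - ((a.natAbs : ℂ) - 1) / 2) i
          = (fun j : ℕ => (j : ℂ) - ((a.natAbs : ℂ) - 1) / 2) j → i = j := by
      intro i _ j _ hij
      simp only at hij
      have : (i : ℂ) = (j : ℂ) := by linear_combination hij
      exact_mod_cast this
    refine ⟨(range ((a.natAbs + b.natAbs) / 2)).image
      (fun j : ℕ => (j : ℂ) - ((a.natAbs : ℂ) - 1) / 2), fun z => ?_⟩
    unfold qPoly
    simp only [if_neg hab, if_neg hs]
    rw [Finset.prod_image hinj]
    exact Finset.prod_congr rfl fun j _ => by ring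

theorem qPoly_ne_zero_of_not_mem {a b : ℤ} {S : Finset ℂ}
    (hS : ∀ z : ℂ, qPoly a b z = ∏ r ∈ S, (z - r)) {u : ℂ} (hu : u ∉ S) :
    qPoly a b u ≠ 0 := by
  rw [hS u]
  intro h0
  obtain ⟨i, hi, hzi⟩ := Finset.prod_eq_zero_iff.mp h0
  rw [sub_eq_zero] at hzi
  exact hu (hzi ▸ hi)


end

/-- Intertwining condition in Level 3 for `SL(2,ℝ) × SL(2,ℝ)`: with
`q(λ₁,λ₂) = q_{l₁,n₁}(λ₁)·q_{l₂,n₂}(λ₂)`, an entire `φ : ℂ² → ℂ` satisfies the two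
functional equations and the vanishing condition at zeros of the factors if and only if
`φ = h · q` for an entire `h` even in each variable. -/
theorem stmt_5 (l₁ l₂ n₁ n₂ : ℤ) (h1 : l₁ % 2 = n₁ % 2) (h2 : l₂ % 2 = n₂ % 2)
    (φ : ℂ × ℂ → ℂ) (hφ : Differentiable ℂ φ) :
    ((∀ z : ℂ × ℂ, φ (-z.1, z.2) * (qPoly l₁ n₁ z.1 * qPoly l₂ n₂ z.2) =
        φ z * (qPoly l₁ n₁ (-z.1) * qPoly l₂ n₂ z.2)) ∧
      (∀ z : ℂ × ℂ, φ (z.1, -z.2) * (qPoly l₁ n₁ z.1 * qPoly l₂ n₂ z.2) =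
        φ z * (qPoly l₁ n₁ z.1 * qPoly l₂ n₂ (-z.2))) ∧
      (∀ z : ℂ × ℂ, (qPoly l₁ n₁ z.1 = 0 ∨ qPoly l₂ n₂ z.2 = 0) → φ z = 0)) ↔
    (∃ h : ℂ × ℂ → ℂ, Differentiable ℂ h ∧
      (∀ z : ℂ × ℂ, h (-z.1, z.2) = h z) ∧ (∀ z : ℂ × ℂ, h (z.1, -z.2) = h z) ∧
      ∀ z : ℂ × ℂ, φ z = h z * (qPoly l₁ n₁ z.1 * qPoly l₂ n₂ z.2)) := by
  constructor
  · rintro ⟨heq1, heq2, hvanish⟩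
    obtain ⟨S, hS⟩ := qPoly_exists_roots l₁ n₁
    obtain ⟨T, hT⟩ := qPoly_exists_roots l₂ n₂
    have hvS : ∀ z : ℂ × ℂ, z.1 ∈ S → φ z = 0 := fun z hz =>
      hvanish z (Or.inl (by rw [hS]; exact Finset.prod_eq_zero hz (sub_self z.1)))
    have hvT : ∀ z : ℂ × ℂ, z.2 ∈ T → φ z = 0 := fun z hz =>
      hvanish z (Or.inr (by rw [hT]; exact Finset.prod_eq_zero hz (sub_self z.2)))
    obtain ⟨ψ, hψd, hψ⟩ := strip_both S T φ hφ hvS hvT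
    have hrep : ∀ z : ℂ × ℂ, φ z = ψ z * (qPoly l₁ n₁ z.1 * qPoly l₂ n₂ z.2) := by
      intro z
      rw [hψ z, hS, hT]
      ring
    -- evenness in the first variable
    have hgen1 : ∀ u v : ℂ, u ∉ S → -u ∉ S → v ∉ T → ψ (-u, v) = ψ (u, v) := by
      intro u v hu hnu hv
      have e := heq1 (u, v)
      dsimp only at e
      rw [hrep (u, v), hrep (-u, v)] at e
      dsimp only at e
      have hne : (qPoly l₁ n₁ u * qPoly l₂ n₂ v) * (qPoly l₁ n₁ (-u) * qPoly l₂ n₂ v) ≠ 0 :=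
        mul_ne_zero (mul_ne_zero (qPoly_ne_zero_of_not_mem hS hu) (qPoly_ne_zero_of_not_mem hT hv))
          (mul_ne_zero (qPoly_ne_zero_of_not_mem hS hnu) (qPoly_ne_zero_of_not_mem hT hv))
      apply mul_right_cancel₀ hne
      linear_combination e
    have hgen2 : ∀ u v : ℂ, v ∉ T → -v ∉ T → u ∉ S → ψ (u, -v) = ψ (u, v) := by
      intro u v hv hnv hu
      have e := heq2 (u, v)
      dsimp only at e
      rw [hrep (u, v), hrep (u, -v)] at e
      dsimp only at e
      have hne : (qPoly l₁ n₁ u * qPoly l₂ n₂ v) * (qPoly l₁ n₁ u * qPoly l₂ n₂ (-v)) ≠ 0 :=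
        mul_ne_zero (mul_ne_zero (qPoly_ne_zero_of_not_mem hS hu) (qPoly_ne_zero_of_not_mem hT hv))
          (mul_ne_zero (qPoly_ne_zero_of_not_mem hS hu) (qPoly_ne_zero_of_not_mem hT hnv))
      apply mul_right_cancel₀ hne
      linear_combination e
    have hdS : Dense ((↑S ∪ (fun u : ℂ => -u) ⁻¹' ↑S : Set ℂ)ᶜ) :=
      Set.Countable.dense_compl ℂ ((S.countable_toSet).union
        ((S.finite_toSet.preimage (neg_injective.injOn)).countable))
    have hdT : Dense ((↑T ∪ (fun v : ℂ => -v) ⁻¹' ↑T : Set ℂ)ᶜ) :=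
      Set.Countable.dense_compl ℂ ((T.countable_toSet).union
        ((T.finite_toSet.preimage (neg_injective.injOn)).countable))
    have hdS' : Dense ((↑S : Set ℂ)ᶜ) := Set.Countable.dense_compl ℂ S.countable_toSet
    have hdT' : Dense ((↑T : Set ℂ)ᶜ) := Set.Countable.dense_compl ℂ T.countable_toSet
    have heven1 : ∀ z : ℂ × ℂ, ψ (-z.1, z.2) = ψ z := by
      have step : ∀ v : ℂ, v ∉ T → ∀ u : ℂ, ψ (-u, v) = ψ (u, v) := by
        intro v hv
        have hc1 : Continuous fun u : ℂ => ψ (-u, v) :=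
          hψd.continuous.comp (continuous_neg.prodMk continuous_const)
        have hc2 : Continuous fun u : ℂ => ψ (u, v) :=
          hψd.continuous.comp (continuous_id.prodMk continuous_const)
        have := Continuous.ext_on hdS hc1 hc2 (fun u hu => by
          rw [Set.mem_compl_iff, Set.mem_union] at hu
          push_neg at hu
          exact hgen1 u v hu.1 hu.2 hv)
        exact fun u => congrFun this u
      intro z
      have hc1 : Continuous fun v : ℂ => ψ (-z.1, v) :=
        hψd.continuous.comp (continuous_const.prodMk continuous_id)
      have hc2 : Continuous fun v : ℂ => ψ (z.1, v) :=
        hψd.continuous.comp (continuous_const.prodMk continuous_id)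
      have := Continuous.ext_on hdT' hc1 hc2 (fun v hv => step v hv z.1)
      have h := congrFun this z.2
      simpa using h
    have heven2 : ∀ z : ℂ × ℂ, ψ (z.1, -z.2) = ψ z := by
      have step : ∀ u : ℂ, u ∉ S → ∀ v : ℂ, ψ (u, -v) = ψ (u, v) := by
        intro u hu
        have hc1 : Continuous fun v : ℂ => ψ (u, -v) :=
          hψd.continuous.comp (continuous_const.prodMk continuous_neg)
        have hc2 : Continuous fun v : ℂ => ψ (u, v) :=
          hψd.continuous.comp (continuous_const.prodMk continuous_id)
        have := Continuous.ext_on hdT hc1 hc2 (fun v hv => by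
          rw [Set.mem_compl_iff, Set.mem_union] at hv
          push_neg at hv
          exact hgen2 u v hv.1 hv.2 hu)
        exact fun v => congrFun this v
      intro z
      have hc1 : Continuous fun u : ℂ => ψ (u, -z.2) :=
        hψd.continuous.comp (continuous_id.prodMk continuous_const)
      have hc2 : Continuous fun u : ℂ => ψ (u, z.2) :=
        hψd.continuous.comp (continuous_id.prodMk continuous_const)
      have := Continuous.ext_on hdS' hc1 hc2 (fun u hu => step u hu z.2)
      have h := congrFun this z.1
      simpa using h
    exact ⟨ψ, hψd, heven1, heven2, hrep⟩
  · rintro ⟨h, hd, he1, he2, hrep⟩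
    refine ⟨fun z => ?_, fun z => ?_, fun z h0 => ?_⟩
    · rw [hrep (-z.1, z.2), hrep z, he1 z]
      dsimp only
      ring
    · rw [hrep (z.1, -z.2), hrep z, he2 z]
      dsimp only
      ring
    · rw [hrep z]
      rcases h0 with h0 | h0 <;> rw [h0] <;> ring
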